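/- Consider a structured 3DM' instance with parameters n, q, m (n = qm), blocks W_k, coloring χ with τ colors, and maps f and g as defined in the context, and let α be any positive integer with the jobs defined in the context. If the instance admits a proper matching M, then there exist m pairwise disjoint sets of jobs whose union consists of all cover jobs, all dummy jobs, and exactly the match jobs of the matches in M, such that each of the m sets has total size exactly L = 6m³·∑_{i=1}^{12q+τ} α^i. -/

import Mathlib

/-- The elements of the 3DM' instance: `w_i`, `w̄_i`, `s_j`, `a_i`, `b_i`. -/
inductive Elem : Type
  | w (i : ℕ)
  | wbar (i : ℕ)
  | s (j : ℕ)
  | a (i : ℕ)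
  | b (i : ℕ)
  deriving DecidableEq

/-- `ζ(3k+1) = 3k+2`, `ζ(3k+2) = 3k+3`, `ζ(3k+3) = 3k+1`. -/
def zeta (i : ℕ) : ℕ :=
  if i % 3 = 1 then i + 1 else if i % 3 = 2 then i + 1 else i - 2

/-- The one-element matches `{w_i}`, `{w̄_i}`. -/
def T1 (n : ℕ) : Finset (Finset Elem) :=
  (Finset.Icc 1 (3 * n)).image (fun i => {Elem.w i}) ∪
    (Finset.Icc 1 (3 * n)).image (fun i => {Elem.wbar i})

/-- The matches `{w_i, a_i, b_i}` and `{w̄_i, a_i, b_{ζ(i)}}`. -/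
def T3 (n : ℕ) : Finset (Finset Elem) :=
  (Finset.Icc 1 (3 * n)).image (fun i => {Elem.w i, Elem.a i, Elem.b i}) ∪
    (Finset.Icc 1 (3 * n)).image (fun i => {Elem.wbar i, Elem.a i, Elem.b (zeta i)})

/-- The ground set `W ∪ X ∪ Y`. -/
def allElems (n s : ℕ) : Finset Elem :=
  (Finset.Icc 1 (3 * n)).image Elem.w ∪ (Finset.Icc 1 (3 * n)).image Elem.wbar ∪
    (Finset.Icc 1 s).image Elem.s ∪ (Finset.Icc 1 (3 * n)).image Elem.a ∪
    (Finset.Icc 1 (3 * n)).image Elem.b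

/-- A proper matching: a subset of the matches in which every element of the
ground set appears exactly once. -/
def ProperMatching (n s : ℕ) (T2 M : Finset (Finset Elem)) : Prop :=
  M ⊆ T1 n ∪ T2 ∪ T3 n ∧ ∀ η ∈ allElems n s, (M.filter (fun e => η ∈ e)).card = 1

/-- Membership of an element in the block `W_k = {w_i, w̄_i : 3kq < i ≤ 3kq + 3q}`. -/
def inBlock (q k : ℕ) (η : Elem) : Prop :=
  ∃ i, 3 * k * q < i ∧ i ≤ 3 * k * q + 3 * q ∧ (η = Elem.w i ∨ η = Elem.wbar i)

/-- The bit-allocation map `f`. -/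
def fmap (q : ℕ) (χ : ℕ → ℕ) : Elem → ℕ
  | .b i => (i - 1) % (3 * q) + 1
  | .a i => 3 * q + ((i - 1) % (3 * q) + 1)
  | .w i => 6 * q + ((i - 1) % (3 * q) + 1)
  | .wbar i => 9 * q + ((i - 1) % (3 * q) + 1)
  | .s j => 12 * q + χ j

/-- The coefficient map `g`: elements of block `k` get `m + k`, and
`s_j` gets `m + l − 1` where `j` is the `l`-th index of its color
(`rk j = l` for the fixed enumeration `rk`). -/
def gmap (q m : ℕ) (rk : ℕ → ℕ) : Elem → ℕ
  | .b i => m + (i - 1) / (3 * q)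
  | .a i => m + (i - 1) / (3 * q)
  | .w i => m + (i - 1) / (3 * q)
  | .wbar i => m + (i - 1) / (3 * q)
  | .s j => m + rk j - 1

/-- The size of the `t`-th color class of `χ`. -/
def classCard (s : ℕ) (χ : ℕ → ℕ) (t : ℕ) : ℕ :=
  ((Finset.Icc 1 s).filter (fun j => χ j = t)).card

/-- The jobs of the reduction: one match job per match, one cover job per
element, and dummy jobs indexed by a color and a counter. -/
inductive Job : Type
  | mtch (e : Finset Elem)
  | cover (η : Elem)
  | dummy (t : ℕ) (idx : ℕ)
  deriving DecidableEq

/-- Job sizes: a match job has size `∑_{η ∈ e} g(η)·α^{f(η)}`, a cover job has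
size `(6m³ − g(η))·α^{f(η)}`, and a dummy job of color `t` has size
`6m³·α^{12q+t}`. -/
def jobSize (α q m : ℕ) (χ rk : ℕ → ℕ) : Job → ℕ
  | .mtch e => ∑ η ∈ e, gmap q m rk η * α ^ fmap q χ η
  | .cover η => (6 * m ^ 3 - gmap q m rk η) * α ^ fmap q χ η
  | .dummy t _ => 6 * m ^ 3 * α ^ (12 * q + t)

/-- The cover jobs: one for every element of the ground set. -/
def coverJobs (n s : ℕ) : Finset Job := (allElems n s).image Job.cover

/-- The dummy jobs: `m − l_t` jobs for each color `t ∈ {1,…,τ}`. -/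
def dummyJobs (s τ m : ℕ) (χ : ℕ → ℕ) : Finset Job :=
  (Finset.Icc 1 τ).biUnion
    (fun t => (Finset.range (m - classCard s χ t)).image (Job.dummy t))
section aux
open Finset

lemma div_eq_iff'' {a b k : ℕ} (hb : 0 < b) : a / b = k ↔ k * b ≤ a ∧ a < (k+1) * b := by
  rw [← Nat.le_div_iff_mul_le hb, ← Nat.div_lt_iff_lt_mul hb]; omega

/-- counting indices hitting a given value in the sorted enumeration of a finset -/
lemma sort_count (A : Finset ℕ) (k : ℕ) :
    ((Finset.range A.card).filter
      (fun i => ((A.sort (·≤·)).getD i 0) = k)).card = if k ∈ A then 1 else 0 := by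
  set l := A.sort (·≤·) with hl
  have hlen : l.length = A.card := Finset.length_sort _
  have hnd : l.Nodup := Finset.sort_nodup _ _
  have hmem : ∀ x, x ∈ l ↔ x ∈ A := fun x => Finset.mem_sort _
  split_ifs with hk
  · obtain ⟨⟨idx, hidx⟩, hget⟩ := List.mem_iff_get.mp ((hmem k).mpr hk)
    rw [Finset.card_eq_one]
    refine ⟨idx, ?_⟩
    ext i
    simp only [Finset.mem_filter, Finset.mem_range, Finset.mem_singleton]
    constructor
    · rintro ⟨hi, hv⟩
      have hi' : i < l.length := hlen ▸ hi
      rw [List.getD_eq_getElem l 0 hi'] at hv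
      have : l[i] = l[idx] := by rw [hv, ← hget]; simp [List.get_eq_getElem]
      exact (List.Nodup.getElem_inj_iff hnd).mp this
    · rintro rfl
      refine ⟨hlen ▸ hidx, ?_⟩
      rw [List.getD_eq_getElem l 0 (hlen ▸ hidx)]
      rw [← hget]; simp [List.get_eq_getElem]
  · rw [Finset.card_eq_zero]
    ext i
    simp only [Finset.mem_filter, Finset.mem_range, Finset.notMem_empty, iff_false, not_and]
    intro hi hv
    have hi' : i < l.length := hlen ▸ hi
    rw [List.getD_eq_getElem l 0 hi'] at hv
    exact hk ((hmem _).mp (hv ▸ List.getElem_mem hi'))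

/-- block index of a non-s element -/
def elemBlk (q : ℕ) : Elem → ℕ
  | .w i => (i-1)/(3*q) | .wbar i => (i-1)/(3*q) | .a i => (i-1)/(3*q)
  | .b i => (i-1)/(3*q) | .s _ => 0

def mach (q : ℕ) (e : Finset Elem) : ℕ := e.sup (elemBlk q)

def sMach (q : ℕ) (M : Finset (Finset Elem)) (j : ℕ) : ℕ :=
  (M.filter (fun e => Elem.s j ∈ e)).sup (mach q)

def emach (q : ℕ) (M : Finset (Finset Elem)) : Elem → ℕ
  | .s j => sMach q M j
  | η => elemBlk q η

/-- zeta stays in the same block -/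
lemma zeta_blk {q i : ℕ} (hq : 1 ≤ q) (hi : 1 ≤ i) :
    (zeta i - 1) / (3*q) = (i-1)/(3*q) := by
  have h3q : 0 < 3*q := by omega
  have h1 := Nat.div_add_mod (i-1) (3*q)
  have h2 : (i - 1) % (3 * q) < 3*q := Nat.mod_lt _ h3q
  have h3 : (i - 1) % (3 * q) % 3 = (i-1) % 3 := Nat.mod_mod_of_dvd _ ⟨q, rfl⟩
  set c := (i-1)/(3*q) with hc
  set r := (i-1) % (3*q) with hr
  have h1' : c*(3*q) + r = i - 1 := by rw [mul_comm]; exact h1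
  rw [div_eq_iff'' h3q, show (c+1)*(3*q) = c*(3*q)+3*q from by ring]
  generalize hP : c*(3*q) = P at h1' ⊢
  unfold zeta; split_ifs <;> omega

lemma zeta_mem {n i : ℕ} (hi : i ∈ Finset.Icc 1 (3*n)) : zeta i ∈ Finset.Icc 1 (3*n) := by
  simp only [Finset.mem_Icc] at *
  unfold zeta; split_ifs <;> omega

lemma blk_lt {q m n i : ℕ} (hq : 1 ≤ q) (hqm : n = q * m) (hi : i ∈ Finset.Icc 1 (3*n)) :
    (i-1)/(3*q) < m := by
  rw [Nat.div_lt_iff_lt_mul (by omega)]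
  simp only [Finset.mem_Icc] at hi
  have : m * (3*q) = 3 * (q*m) := by ring
  rw [this]; omega

lemma mem_allElems_w {n s i : ℕ} : Elem.w i ∈ allElems n s ↔ i ∈ Finset.Icc 1 (3*n) := by
  simp [allElems]
lemma mem_allElems_wbar {n s i : ℕ} : Elem.wbar i ∈ allElems n s ↔ i ∈ Finset.Icc 1 (3*n) := by
  simp [allElems]
lemma mem_allElems_a {n s i : ℕ} : Elem.a i ∈ allElems n s ↔ i ∈ Finset.Icc 1 (3*n) := by
  simp [allElems]
lemma mem_allElems_b {n s i : ℕ} : Elem.b i ∈ allElems n s ↔ i ∈ Finset.Icc 1 (3*n) := by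
  simp [allElems]
lemma mem_allElems_s {n s j : ℕ} : Elem.s j ∈ allElems n s ↔ j ∈ Finset.Icc 1 s := by
  simp [allElems]

lemma mach_w_single (q i) : mach q {Elem.w i} = (i-1)/(3*q) := by simp [mach, elemBlk]
lemma mach_wbar_single (q i) : mach q {Elem.wbar i} = (i-1)/(3*q) := by simp [mach, elemBlk]
lemma mach_pair_w (q i j) : mach q {Elem.w i, Elem.s j} = (i-1)/(3*q) := by
  simp [mach, elemBlk]
lemma mach_pair_wbar (q i j) : mach q {Elem.wbar i, Elem.s j} = (i-1)/(3*q) := by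
  simp [mach, elemBlk]
lemma mach_triple_w (q i) : mach q {Elem.w i, Elem.a i, Elem.b i} = (i-1)/(3*q) := by
  simp [mach, elemBlk]
lemma mach_triple_wbar {q i : ℕ} (hq : 1 ≤ q) (hi : 1 ≤ i) :
    mach q {Elem.wbar i, Elem.a i, Elem.b (zeta i)} = (i-1)/(3*q) := by
  simp [mach, elemBlk, zeta_blk hq hi]

end aux
section struct
open Finset

variable {n q m s : ℕ} {T2 M : Finset (Finset Elem)}

/-- shape analysis of matches -/
lemma match_shape
    (hT2form : ∀ e ∈ T2, ∃ i ∈ Finset.Icc 1 (3 * n), ∃ j ∈ Finset.Icc 1 s,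
      e = {Elem.w i, Elem.s j} ∨ e = {Elem.wbar i, Elem.s j})
    (hsub : M ⊆ T1 n ∪ T2 ∪ T3 n) {e : Finset Elem} (he : e ∈ M) :
    (∃ i ∈ Finset.Icc 1 (3*n), e = {Elem.w i} ∨ e = {Elem.wbar i} ∨
        e = {Elem.w i, Elem.a i, Elem.b i} ∨ e = {Elem.wbar i, Elem.a i, Elem.b (zeta i)}) ∨
    (∃ i ∈ Finset.Icc 1 (3*n), ∃ j ∈ Finset.Icc 1 s,
        e = {Elem.w i, Elem.s j} ∨ e = {Elem.wbar i, Elem.s j}) := by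
  have := hsub he
  rw [Finset.mem_union, Finset.mem_union] at this
  rcases this with (h | h) | h
  · left
    simp only [T1, Finset.mem_union, Finset.mem_image] at h
    rcases h with ⟨i, hi, rfl⟩ | ⟨i, hi, rfl⟩
    · exact ⟨i, hi, Or.inl rfl⟩
    · exact ⟨i, hi, Or.inr (Or.inl rfl)⟩
  · exact Or.inr (hT2form e h)
  · left
    simp only [T3, Finset.mem_union, Finset.mem_image] at h
    rcases h with ⟨i, hi, rfl⟩ | ⟨i, hi, rfl⟩
    · exact ⟨i, hi, Or.inr (Or.inr (Or.inl rfl))⟩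
    · exact ⟨i, hi, Or.inr (Or.inr (Or.inr rfl))⟩

/-- only T2 matches contain s-elements, and they determine the pair -/
lemma s_shape
    (hT2form : ∀ e ∈ T2, ∃ i ∈ Finset.Icc 1 (3 * n), ∃ j ∈ Finset.Icc 1 s,
      e = {Elem.w i, Elem.s j} ∨ e = {Elem.wbar i, Elem.s j})
    (hsub : M ⊆ T1 n ∪ T2 ∪ T3 n) {e : Finset Elem} (he : e ∈ M) {j : ℕ}
    (hs : Elem.s j ∈ e) :
    e ∈ T2 ∧ j ∈ Finset.Icc 1 s ∧ ∃ i ∈ Finset.Icc 1 (3*n),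
      (e = {Elem.w i, Elem.s j} ∨ e = {Elem.wbar i, Elem.s j}) := by
  have hshape := match_shape hT2form hsub he
  have he2 : e ∈ T2 := by
    have := hsub he
    rw [Finset.mem_union, Finset.mem_union] at this
    rcases this with (h | h) | h
    · exfalso
      simp only [T1, Finset.mem_union, Finset.mem_image] at h
      rcases h with ⟨i, _, rfl⟩ | ⟨i, _, rfl⟩ <;> simp at hs
    · exact h
    · exfalso
      simp only [T3, Finset.mem_union, Finset.mem_image] at h
      rcases h with ⟨i, _, rfl⟩ | ⟨i, _, rfl⟩ <;> simp at hs
  obtain ⟨i, hi, j', hj', hor⟩ := hT2form e he2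
  have hj : j = j' := by rcases hor with rfl | rfl <;> simpa using hs
  subst hj
  exact ⟨he2, hj', i, hi, hor⟩

/-- every element of a match is in the ground set -/
lemma match_sub_all
    (hT2form : ∀ e ∈ T2, ∃ i ∈ Finset.Icc 1 (3 * n), ∃ j ∈ Finset.Icc 1 s,
      e = {Elem.w i, Elem.s j} ∨ e = {Elem.wbar i, Elem.s j})
    (hsub : M ⊆ T1 n ∪ T2 ∪ T3 n) {e : Finset Elem} (he : e ∈ M) :
    ∀ η ∈ e, η ∈ allElems n s := by
  intro η hη
  rcases match_shape hT2form hsub he with ⟨i, hi, rfl | rfl | rfl | rfl⟩ |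
      ⟨i, hi, j, hj, rfl | rfl⟩ <;>
    simp only [Finset.mem_insert, Finset.mem_singleton] at hη <;>
    rcases hη with rfl | rfl | rfl <;>
    first
      | exact mem_allElems_w.mpr hi
      | exact mem_allElems_wbar.mpr hi
      | exact mem_allElems_a.mpr hi
      | exact mem_allElems_b.mpr hi
      | exact mem_allElems_b.mpr (zeta_mem hi)
      | exact mem_allElems_s.mpr hj

lemma unique_match (hM : ProperMatching n s T2 M) {η : Elem} (hη : η ∈ allElems n s) :
    ∃ e, M.filter (fun e => η ∈ e) = {e} :=
  Finset.card_eq_one.mp (hM.2 η hη)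

lemma match_disjoint (hM : ProperMatching n s T2 M)
    (hT2form : ∀ e ∈ T2, ∃ i ∈ Finset.Icc 1 (3 * n), ∃ j ∈ Finset.Icc 1 s,
      e = {Elem.w i, Elem.s j} ∨ e = {Elem.wbar i, Elem.s j})
    {e e' : Finset Elem} (he : e ∈ M) (he' : e' ∈ M) (hne : e ≠ e') :
    Disjoint e e' := by
  rw [Finset.disjoint_left]
  intro η h1 h2
  obtain ⟨e0, hf⟩ := unique_match hM (match_sub_all hT2form hM.1 he η h1)
  have q1 : e ∈ M.filter (fun e => η ∈ e) := Finset.mem_filter.mpr ⟨he, h1⟩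
  have q2 : e' ∈ M.filter (fun e => η ∈ e) := Finset.mem_filter.mpr ⟨he', h2⟩
  rw [hf, Finset.mem_singleton] at q1 q2
  exact hne (q1.trans q2.symm)

lemma sMach_eq (hM : ProperMatching n s T2 M) {j : ℕ} (hj : j ∈ Finset.Icc 1 s)
    {e : Finset Elem} (he : e ∈ M) (hs : Elem.s j ∈ e) :
    sMach q M j = mach q e := by
  obtain ⟨e0, hf⟩ := unique_match hM (mem_allElems_s.mpr hj)
  have q1 : e ∈ M.filter (fun e => Elem.s j ∈ e) := Finset.mem_filter.mpr ⟨he, hs⟩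
  rw [hf, Finset.mem_singleton] at q1
  subst q1
  rw [sMach, hf, Finset.sup_singleton]

/-- the machine of a match agrees with the machine of each of its elements -/
lemma mach_eq_emach (hq : 1 ≤ q) (hM : ProperMatching n s T2 M)
    (hT2form : ∀ e ∈ T2, ∃ i ∈ Finset.Icc 1 (3 * n), ∃ j ∈ Finset.Icc 1 s,
      e = {Elem.w i, Elem.s j} ∨ e = {Elem.wbar i, Elem.s j})
    {e : Finset Elem} (he : e ∈ M) {η : Elem} (hη : η ∈ e) :
    mach q e = emach q M η := by
  rcases match_shape hT2form hM.1 he with ⟨i, hi, rfl | rfl | rfl | rfl⟩ |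
      ⟨i, hi, j, hj, rfl | rfl⟩ <;>
    simp only [Finset.mem_insert, Finset.mem_singleton] at hη
  · subst hη; rw [mach_w_single]; rfl
  · subst hη; rw [mach_wbar_single]; rfl
  · rw [mach_triple_w]; rcases hη with rfl | rfl | rfl <;> rfl
  · have h1 : 1 ≤ i := by simp only [Finset.mem_Icc] at hi; omega
    rw [mach_triple_wbar hq h1]
    rcases hη with rfl | rfl | rfl
    · rfl
    · rfl
    · show _ = (zeta i - 1)/(3*q); rw [zeta_blk hq h1]
  · rcases hη with rfl | rfl
    · rw [mach_pair_w]; rfl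
    · rw [mach_pair_w]
      show _ = sMach q M j
      rw [sMach_eq hM hj he (by simp)]
      rw [mach_pair_w]
  · rcases hη with rfl | rfl
    · rw [mach_pair_wbar]; rfl
    · rw [mach_pair_wbar]
      show _ = sMach q M j
      rw [sMach_eq hM hj he (by simp)]
      rw [mach_pair_wbar]

lemma mach_lt (hq : 1 ≤ q) (hm : 1 ≤ m) (hqm : n = q * m)
    (hT2form : ∀ e ∈ T2, ∃ i ∈ Finset.Icc 1 (3 * n), ∃ j ∈ Finset.Icc 1 s,
      e = {Elem.w i, Elem.s j} ∨ e = {Elem.wbar i, Elem.s j})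
    (hsub : M ⊆ T1 n ∪ T2 ∪ T3 n) {e : Finset Elem} (he : e ∈ M) :
    mach q e < m := by
  rcases match_shape hT2form hsub he with ⟨i, hi, rfl | rfl | rfl | rfl⟩ |
      ⟨i, hi, j, hj, rfl | rfl⟩
  · rw [mach_w_single]; exact blk_lt hq hqm hi
  · rw [mach_wbar_single]; exact blk_lt hq hqm hi
  · rw [mach_triple_w]; exact blk_lt hq hqm hi
  · rw [mach_triple_wbar hq (by simp only [Finset.mem_Icc] at hi; omega)]
    exact blk_lt hq hqm hi
  · rw [mach_pair_w]; exact blk_lt hq hqm hi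
  · rw [mach_pair_wbar]; exact blk_lt hq hqm hi

end struct
section struct2
open Finset

variable {n q m s τ : ℕ} {T2 M : Finset (Finset Elem)} {χ : ℕ → ℕ}

lemma blk_inBlock {q i : ℕ} (hq : 1 ≤ q) (hi : 1 ≤ i) {η : Elem}
    (h : η = Elem.w i ∨ η = Elem.wbar i) : inBlock q ((i-1)/(3*q)) η := by
  refine ⟨i, ?_, ?_, by tauto⟩ <;>
  · have h1 := Nat.div_add_mod (i-1) (3*q)
    have h2 : (i - 1) % (3 * q) < 3*q := Nat.mod_lt _ (by omega)
    rw [show 3 * ((i-1)/(3*q)) * q = 3*q*((i-1)/(3*q)) from by ring]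
    generalize hP : 3*q*((i-1)/(3*q)) = P at h1 ⊢
    omega

lemma s_match (hq : 1 ≤ q) (hm : 1 ≤ m) (hqm : n = q * m) (hM : ProperMatching n s T2 M)
    (hT2form : ∀ e ∈ T2, ∃ i ∈ Finset.Icc 1 (3 * n), ∃ j ∈ Finset.Icc 1 s,
      e = {Elem.w i, Elem.s j} ∨ e = {Elem.wbar i, Elem.s j})
    {j : ℕ} (hj : j ∈ Finset.Icc 1 s) :
    sMach q M j < m ∧ ∃ e ∈ T2, Elem.s j ∈ e ∧ ∃ η ∈ e, inBlock q (sMach q M j) η := by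
  obtain ⟨e0, hf⟩ := unique_match hM (mem_allElems_s.mpr hj)
  have he0 : e0 ∈ M.filter (fun e => Elem.s j ∈ e) := hf ▸ Finset.mem_singleton_self e0
  rw [Finset.mem_filter] at he0
  obtain ⟨heM, hes⟩ := he0
  have hsm : sMach q M j = mach q e0 := sMach_eq hM hj heM hes
  obtain ⟨he2, _, i, hi, hor⟩ := s_shape hT2form hM.1 heM hes
  have hi1 : 1 ≤ i := by simp only [Finset.mem_Icc] at hi; omega
  refine ⟨hsm ▸ mach_lt hq hm hqm hT2form hM.1 heM, e0, he2, hes, ?_⟩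
  rcases hor with rfl | rfl
  · refine ⟨Elem.w i, by simp, ?_⟩
    rw [hsm, mach_pair_w]
    exact blk_inBlock hq hi1 (Or.inl rfl)
  · refine ⟨Elem.wbar i, by simp, ?_⟩
    rw [hsm, mach_pair_wbar]
    exact blk_inBlock hq hi1 (Or.inr rfl)

/-- same machine forces different colors -/
lemma sMach_color (hq : 1 ≤ q) (hm : 1 ≤ m) (hqm : n = q * m)
    (hM : ProperMatching n s T2 M)
    (hT2form : ∀ e ∈ T2, ∃ i ∈ Finset.Icc 1 (3 * n), ∃ j ∈ Finset.Icc 1 s,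
      e = {Elem.w i, Elem.s j} ∨ e = {Elem.wbar i, Elem.s j})
    (hχ : ∀ j ∈ Finset.Icc 1 s, ∀ j' ∈ Finset.Icc 1 s, j ≠ j' → ∀ k < m,
      (∃ e ∈ T2, Elem.s j ∈ e ∧ ∃ η ∈ e, inBlock q k η) →
      (∃ e ∈ T2, Elem.s j' ∈ e ∧ ∃ η ∈ e, inBlock q k η) → χ j ≠ χ j')
    {j j' : ℕ} (hj : j ∈ Finset.Icc 1 s) (hj' : j' ∈ Finset.Icc 1 s) (hne : j ≠ j')
    (heq : sMach q M j = sMach q M j') : χ j ≠ χ j' := by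
  obtain ⟨hlt, hw⟩ := s_match hq hm hqm hM hT2form hj
  obtain ⟨hlt', hw'⟩ := s_match hq hm hqm hM hT2form hj'
  exact hχ j hj j' hj' hne (sMach q M j) hlt hw (heq ▸ hw')

lemma card_hit (hq : 1 ≤ q) (hm : 1 ≤ m) (hqm : n = q * m)
    (hM : ProperMatching n s T2 M)
    (hT2form : ∀ e ∈ T2, ∃ i ∈ Finset.Icc 1 (3 * n), ∃ j ∈ Finset.Icc 1 s,
      e = {Elem.w i, Elem.s j} ∨ e = {Elem.wbar i, Elem.s j})
    (hχ : ∀ j ∈ Finset.Icc 1 s, ∀ j' ∈ Finset.Icc 1 s, j ≠ j' → ∀ k < m,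
      (∃ e ∈ T2, Elem.s j ∈ e ∧ ∃ η ∈ e, inBlock q k η) →
      (∃ e ∈ T2, Elem.s j' ∈ e ∧ ∃ η ∈ e, inBlock q k η) → χ j ≠ χ j')
    (t : ℕ) :
    (((Finset.Icc 1 s).filter (fun j => χ j = t)).image (sMach q M)).card
      = classCard s χ t := by
  rw [classCard]
  apply Finset.card_image_of_injOn
  intro j hj j' hj' heq
  simp only [Finset.coe_filter, Set.mem_setOf_eq] at hj hj'
  by_contra hne
  exact sMach_color hq hm hqm hM hT2form hχ hj.1 hj'.1 hne heq (hj.2.trans hj'.2.symm)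

lemma card_missing (hq : 1 ≤ q) (hm : 1 ≤ m) (hqm : n = q * m)
    (hM : ProperMatching n s T2 M)
    (hT2form : ∀ e ∈ T2, ∃ i ∈ Finset.Icc 1 (3 * n), ∃ j ∈ Finset.Icc 1 s,
      e = {Elem.w i, Elem.s j} ∨ e = {Elem.wbar i, Elem.s j})
    (hχ : ∀ j ∈ Finset.Icc 1 s, ∀ j' ∈ Finset.Icc 1 s, j ≠ j' → ∀ k < m,
      (∃ e ∈ T2, Elem.s j ∈ e ∧ ∃ η ∈ e, inBlock q k η) →
      (∃ e ∈ T2, Elem.s j' ∈ e ∧ ∃ η ∈ e, inBlock q k η) → χ j ≠ χ j')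
    (t : ℕ) :
    ((Finset.range m) \
        (((Finset.Icc 1 s).filter (fun j => χ j = t)).image (sMach q M))).card
      = m - classCard s χ t := by
  rw [Finset.card_sdiff_of_subset, Finset.card_range, card_hit hq hm hqm hM hT2form hχ]
  intro x hx
  simp only [Finset.mem_image, Finset.mem_filter] at hx
  obtain ⟨j, ⟨hj, _⟩, rfl⟩ := hx
  exact Finset.mem_range.mpr (s_match hq hm hqm hM hT2form hj).1

end struct2
section assign
open Finset

def missingSet (q m s : ℕ) (M : Finset (Finset Elem)) (χ : ℕ → ℕ) (t : ℕ) : Finset ℕ :=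
  (Finset.range m) \ (((Finset.Icc 1 s).filter (fun j => χ j = t)).image (sMach q M))

def machineOf (q m s : ℕ) (M : Finset (Finset Elem)) (χ : ℕ → ℕ) : Job → ℕ
  | .mtch e => mach q e
  | .cover η => emach q M η
  | .dummy t idx => ((missingSet q m s M χ t).sort (·≤·)).getD idx 0

lemma sort_getD_mem {A : Finset ℕ} {idx : ℕ} (h : idx < A.card) :
    ((A.sort (·≤·)).getD idx 0) ∈ A := by
  have hlen : (A.sort (·≤·)).length = A.card := Finset.length_sort _
  rw [List.getD_eq_getElem _ 0 (hlen ▸ h)]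
  exact (Finset.mem_sort _).mp (List.getElem_mem _)

variable {n q m s : ℕ} {T2 M : Finset (Finset Elem)}

lemma emach_lt (hq : 1 ≤ q) (hm : 1 ≤ m) (hqm : n = q * m) (hM : ProperMatching n s T2 M)
    (hT2form : ∀ e ∈ T2, ∃ i ∈ Finset.Icc 1 (3 * n), ∃ j ∈ Finset.Icc 1 s,
      e = {Elem.w i, Elem.s j} ∨ e = {Elem.wbar i, Elem.s j})
    {η : Elem} (hη : η ∈ allElems n s) : emach q M η < m := by
  cases η with
  | w i => exact blk_lt hq hqm (mem_allElems_w.mp hη)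
  | wbar i => exact blk_lt hq hqm (mem_allElems_wbar.mp hη)
  | a i => exact blk_lt hq hqm (mem_allElems_a.mp hη)
  | b i => exact blk_lt hq hqm (mem_allElems_b.mp hη)
  | s j => exact (s_match hq hm hqm hM hT2form (mem_allElems_s.mp hη)).1

lemma biUnion_filter_mach (hq : 1 ≤ q) (hM : ProperMatching n s T2 M)
    (hT2form : ∀ e ∈ T2, ∃ i ∈ Finset.Icc 1 (3 * n), ∃ j ∈ Finset.Icc 1 s,
      e = {Elem.w i, Elem.s j} ∨ e = {Elem.wbar i, Elem.s j}) (k : ℕ) :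
    (M.filter (fun e => mach q e = k)).biUnion id
      = (allElems n s).filter (fun η => emach q M η = k) := by
  ext η
  simp only [Finset.mem_biUnion, Finset.mem_filter, id]
  constructor
  · rintro ⟨e, he, hηe⟩
    exact ⟨match_sub_all hT2form hM.1 he.1 η hηe,
      by rw [← mach_eq_emach hq hM hT2form he.1 hηe]; exact he.2⟩
  · rintro ⟨hall, hem⟩
    obtain ⟨e0, hf⟩ := unique_match hM hall
    have he0' : e0 ∈ M.filter (fun e => η ∈ e) := hf ▸ Finset.mem_singleton_self e0
    have he0 := Finset.mem_filter.mp he0'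
    exact ⟨e0, ⟨he0.1,
      by rw [mach_eq_emach hq hM hT2form he0.1 he0.2]; exact hem⟩, he0.2⟩

lemma blk_filter {k : ℕ} (hq : 1 ≤ q) (hqm : n = q * m) (hk : k < m) :
    (Finset.Icc 1 (3*n)).filter (fun i => (i-1)/(3*q) = k)
      = Finset.Icc (3*k*q+1) (3*k*q+3*q) := by
  ext i
  simp only [Finset.mem_filter, Finset.mem_Icc]
  rw [div_eq_iff'' (show 0 < 3*q by omega)]
  have h1 : (k+1)*(3*q) ≤ m*(3*q) := Nat.mul_le_mul_right _ (by omega)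
  have h2 : m*(3*q) = 3*n := by rw [hqm]; ring
  have e1 : k*(3*q) = 3*k*q := by ring
  have e2 : (k+1)*(3*q) = 3*k*q + 3*q := by ring
  rw [e2] at h1
  rw [e1, e2]
  generalize 3*k*q = P at h1 ⊢
  have h3 : P + 3*q ≤ 3*n := h2 ▸ h1
  omega

lemma mod_blk {p : ℕ} (k : ℕ) (hq : 1 ≤ q) (hp1 : 1 ≤ p) (hp2 : p ≤ 3*q) :
    (3*k*q + p - 1) % (3*q) = p - 1 := by
  have e1 : 3*k*q = (3*q)*k := by ring
  have e2 : 3*k*q + p - 1 = (p-1) + (3*q)*k := by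
    rw [e1]; generalize (3*q)*k = P; omega
  rw [e2, Nat.add_mul_mod_self_left, Nat.mod_eq_of_lt (by omega)]

lemma sum_shift {β : Type*} [AddCommMonoid β] (G : ℕ → β) (c d : ℕ) :
    ∑ p ∈ Finset.Icc 1 d, G (c+p) = ∑ i ∈ Finset.Icc (c+1) (c+d), G i := by
  rw [← Finset.image_add_left_Icc]
  rw [Finset.sum_image (fun x _ y _ h => by omega)]

lemma Icc_glue {β : Type*} [AddCommMonoid β] (G : ℕ → β) (a b c : ℕ)
    (h : a ≤ b) (h2 : b ≤ c) :
    (∑ i ∈ Finset.Icc (a+1) b, G i) + ∑ i ∈ Finset.Icc (b+1) c, G i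
      = ∑ i ∈ Finset.Icc (a+1) c, G i := by
  have conv : ∀ x y : ℕ, Finset.Icc (x+1) y = Finset.Ioc x y := fun x y => Finset.Icc_add_one_left_eq_Ioc x y
  rw [conv, conv, conv]
  exact Finset.sum_Ioc_consecutive G h h2

end assign

section assign2
open Finset

lemma piece_sum' {β : Type*} [AddCommMonoid β] {q : ℕ} (hq : 1 ≤ q) (k : ℕ) (G : ℕ → β) :
    ∑ i ∈ Finset.Icc (3*k*q+1) (3*k*q+3*q), G ((i-1) % (3*q) + 1)
      = ∑ p ∈ Finset.Icc 1 (3*q), G p := by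
  rw [← Finset.image_add_left_Icc, Finset.sum_image (fun x _ y _ h => by omega)]
  apply Finset.sum_congr rfl
  intro p hp
  rw [Finset.mem_Icc] at hp
  rw [mod_blk k hq hp.1 hp.2, show p - 1 + 1 = p from by omega]

lemma glue0 {β : Type*} [AddCommMonoid β] (G : ℕ → β) (b c : ℕ) (h : b ≤ c) :
    (∑ i ∈ Finset.Icc 1 b, G i) + ∑ i ∈ Finset.Icc (b+1) c, G i
      = ∑ i ∈ Finset.Icc 1 c, G i := by
  have := Icc_glue G 0 b c (Nat.zero_le b) h
  simpa using this

lemma himg {f g : ℕ → Elem} (hfg : ∀ x y, f x ≠ g y) (A B : Finset ℕ) :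
    Disjoint (A.image f) (B.image g) := by
  rw [Finset.disjoint_left]
  intro x hx hx'
  obtain ⟨i, _, rfl⟩ := Finset.mem_image.mp hx
  obtain ⟨i', _, he⟩ := Finset.mem_image.mp hx'
  exact hfg _ _ he.symm

end assign2
/-- if the structured 3DM' instance admits a proper matching
`M`, then the cover jobs, the dummy jobs and the match jobs of the matches of
`M` can be partitioned into `m` pairwise disjoint sets, each of total size
exactly `L = 6m³·∑_{i=1}^{12q+τ} α^i`. -/
theorem matching_to_schedule (n q m s τ α : ℕ)
    (hq : 1 ≤ q) (hm : 1 ≤ m) (hqm : n = q * m) (hα : 0 < α)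
    (T2 : Finset (Finset Elem))
    (hT2form : ∀ e ∈ T2, ∃ i ∈ Finset.Icc 1 (3 * n), ∃ j ∈ Finset.Icc 1 s,
      e = {Elem.w i, Elem.s j} ∨ e = {Elem.wbar i, Elem.s j})
    (hT2w : ∀ i ∈ Finset.Icc 1 (3 * n),
      ((T2.filter (fun e => Elem.w i ∈ e)).card = 1 ∧
        (T2.filter (fun e => Elem.wbar i ∈ e)).card = 0) ∨
      ((T2.filter (fun e => Elem.w i ∈ e)).card = 0 ∧
        (T2.filter (fun e => Elem.wbar i ∈ e)).card = 1))
    (hT2s : ∀ j ∈ Finset.Icc 1 s, (T2.filter (fun e => Elem.s j ∈ e)).card ≤ 3)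
    (χ : ℕ → ℕ)
    (hχrange : ∀ j ∈ Finset.Icc 1 s, χ j ∈ Finset.Icc 1 τ)
    (hχ : ∀ j ∈ Finset.Icc 1 s, ∀ j' ∈ Finset.Icc 1 s, j ≠ j' → ∀ k < m,
      (∃ e ∈ T2, Elem.s j ∈ e ∧ ∃ η ∈ e, inBlock q k η) →
      (∃ e ∈ T2, Elem.s j' ∈ e ∧ ∃ η ∈ e, inBlock q k η) → χ j ≠ χ j')
    (hclass : ∀ t, classCard s χ t ≤ m)
    (rk : ℕ → ℕ)
    (hrk : ∀ t ∈ Finset.Icc 1 τ,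
      Set.BijOn rk {j | j ∈ Finset.Icc 1 s ∧ χ j = t} (Set.Icc 1 (classCard s χ t)))
    (M : Finset (Finset Elem)) (hM : ProperMatching n s T2 M) :
    ∃ G : Fin m → Finset Job,
      (∀ i j : Fin m, i ≠ j → Disjoint (G i) (G j)) ∧
      (Finset.univ.biUnion G = coverJobs n s ∪ dummyJobs s τ m χ ∪ M.image Job.mtch) ∧
      (∀ i : Fin m, ∑ job ∈ G i, jobSize α q m χ rk job
        = 6 * m ^ 3 * ∑ i ∈ Finset.Icc 1 (12 * q + τ), α ^ i) := by
  classical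
  have hsub := hM.1
  set φ := machineOf q m s M χ with hφ
  set total := coverJobs n s ∪ dummyJobs s τ m χ ∪ M.image Job.mtch with htotal
  have hlt : ∀ job ∈ total, φ job < m := by
    intro job hj
    rw [htotal, Finset.mem_union, Finset.mem_union] at hj
    rcases hj with (hj | hj) | hj
    · rw [coverJobs, Finset.mem_image] at hj
      obtain ⟨η, hη, rfl⟩ := hj
      exact emach_lt hq hm hqm hM hT2form hη
    · rw [dummyJobs, Finset.mem_biUnion] at hj
      obtain ⟨t, ht, hj⟩ := hj
      rw [Finset.mem_image] at hj
      obtain ⟨idx, hidx, rfl⟩ := hj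
      have hidx' : idx < (missingSet q m s M χ t).card := by
        rw [missingSet, card_missing hq hm hqm hM hT2form hχ]
        exact Finset.mem_range.mp hidx
      have := sort_getD_mem hidx'
      rw [missingSet, Finset.mem_sdiff] at this
      exact Finset.mem_range.mp this.1
    · rw [Finset.mem_image] at hj
      obtain ⟨e, he, rfl⟩ := hj
      exact mach_lt hq hm hqm hT2form hsub he
  refine ⟨fun k => total.filter (fun job => φ job = (k : ℕ)), ?_, ?_, ?_⟩
  · intro i j hij
    rw [Finset.disjoint_left]
    intro x hx hx'
    rw [Finset.mem_filter] at hx hx'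
    exact hij (Fin.ext (hx.2.symm.trans hx'.2))
  · ext job
    simp only [Finset.mem_biUnion, Finset.mem_univ, true_and, Finset.mem_filter]
    constructor
    · rintro ⟨k, hk, _⟩; exact hk
    · intro hj; exact ⟨⟨φ job, hlt job hj⟩, hj, rfl⟩
  -- the size computation
  intro k
  have hkm : (k : ℕ) < m := k.isLt
  -- generic membership shapes
  have hcov : ∀ x ∈ coverJobs n s, ∃ η, x = Job.cover η := by
    intro x hx
    rw [coverJobs, Finset.mem_image] at hx
    obtain ⟨η, _, rfl⟩ := hx; exact ⟨η, rfl⟩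
  have hdum : ∀ x ∈ dummyJobs s τ m χ, ∃ t idx, x = Job.dummy t idx := by
    intro x hx
    rw [dummyJobs, Finset.mem_biUnion] at hx
    obtain ⟨t, _, hx⟩ := hx
    rw [Finset.mem_image] at hx
    obtain ⟨idx, _, rfl⟩ := hx; exact ⟨t, idx, rfl⟩
  have d1 : Disjoint (coverJobs n s) (dummyJobs s τ m χ) := by
    rw [Finset.disjoint_left]
    intro x hx hx'
    obtain ⟨η, rfl⟩ := hcov x hx
    obtain ⟨t, idx, h⟩ := hdum _ hx'
    exact Job.noConfusion h
  have d2 : Disjoint (coverJobs n s ∪ dummyJobs s τ m χ) (M.image Job.mtch) := by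
    rw [Finset.disjoint_left]
    intro x hx hx'
    rw [Finset.mem_image] at hx'
    obtain ⟨e, _, rfl⟩ := hx'
    rcases Finset.mem_union.mp hx with h | h
    · obtain ⟨η, h⟩ := hcov _ h; exact Job.noConfusion h
    · obtain ⟨t, idx, h⟩ := hdum _ h; exact Job.noConfusion h
  beta_reduce
  have hd2' : Disjoint
      ((coverJobs n s).filter (fun job => φ job = (k : ℕ)) ∪
        (dummyJobs s τ m χ).filter (fun job => φ job = (k : ℕ)))
      ((M.image Job.mtch).filter (fun job => φ job = (k : ℕ))) := by
    rw [← Finset.filter_union]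
    exact Finset.disjoint_filter_filter d2
  rw [Finset.filter_union, Finset.filter_union,
    Finset.sum_union hd2',
    Finset.sum_union (Finset.disjoint_filter_filter d1)]
  -- the cover-job sum
  have covSum : ∑ job ∈ (coverJobs n s).filter (fun job => φ job = (k : ℕ)),
      jobSize α q m χ rk job
      = ∑ η ∈ (allElems n s).filter (fun η => emach q M η = (k : ℕ)),
          (6 * m ^ 3 - gmap q m rk η) * α ^ fmap q χ η := by
    rw [coverJobs, Finset.filter_image,
      Finset.sum_image (fun x _ y _ h => Job.cover.inj h)]
    rfl
  -- the match-job sum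
  have mtchSum : ∑ job ∈ (M.image Job.mtch).filter (fun job => φ job = (k : ℕ)),
      jobSize α q m χ rk job
      = ∑ η ∈ (allElems n s).filter (fun η => emach q M η = (k : ℕ)),
          gmap q m rk η * α ^ fmap q χ η := by
    rw [Finset.filter_image, Finset.sum_image (fun x _ y _ h => Job.mtch.inj h)]
    have hpd : ((M.filter (fun e => mach q e = (k : ℕ)) : Finset (Finset Elem))
        : Set (Finset Elem)).PairwiseDisjoint id := by
      intro e he e' he' hne
      rw [Finset.mem_coe, Finset.mem_filter] at he he'
      exact match_disjoint hM hT2form he.1 he'.1 hne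
    rw [← biUnion_filter_mach hq hM hT2form (k : ℕ), Finset.sum_biUnion hpd]
    rfl
  -- g is small
  have g_le : ∀ η ∈ allElems n s, gmap q m rk η ≤ 6 * m ^ 3 := by
    have hm3 : m ≤ m ^ 3 := Nat.le_self_pow (by norm_num) m
    intro η hη
    cases η with
    | w i => have := blk_lt hq hqm (mem_allElems_w.mp hη); simp only [gmap]; omega
    | wbar i => have := blk_lt hq hqm (mem_allElems_wbar.mp hη); simp only [gmap]; omega
    | a i => have := blk_lt hq hqm (mem_allElems_a.mp hη); simp only [gmap]; omega
    | b i => have := blk_lt hq hqm (mem_allElems_b.mp hη); simp only [gmap]; omega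
    | s j =>
      have hj := mem_allElems_s.mp hη
      have ht := hχrange j hj
      have hmem : rk j ∈ Set.Icc 1 (classCard s χ (χ j)) :=
        (hrk (χ j) ht).mapsTo ⟨hj, rfl⟩
      have := hclass (χ j)
      rw [Set.mem_Icc] at hmem
      simp only [gmap]; omega
  -- combined cover+match sum over the k-th cover set
  have coverMatch : (∑ η ∈ (allElems n s).filter (fun η => emach q M η = (k : ℕ)),
        (6 * m ^ 3 - gmap q m rk η) * α ^ fmap q χ η)
      + (∑ η ∈ (allElems n s).filter (fun η => emach q M η = (k : ℕ)),
          gmap q m rk η * α ^ fmap q χ η)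
      = ∑ η ∈ (allElems n s).filter (fun η => emach q M η = (k : ℕ)),
          6 * m ^ 3 * α ^ fmap q χ η := by
    rw [← Finset.sum_add_distrib]
    apply Finset.sum_congr rfl
    intro η hη
    rw [Finset.mem_filter] at hη
    have hg := g_le η hη.1
    rw [← add_mul]
    congr 1
    omega
  -- decompose the k-th cover set sum into five pieces
  have ckSum : ∑ η ∈ (allElems n s).filter (fun η => emach q M η = (k : ℕ)),
        6 * m ^ 3 * α ^ fmap q χ η
      = ((((∑ p ∈ Finset.Icc 1 (3*q), 6 * m ^ 3 * α ^ (6*q + p))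
          + ∑ p ∈ Finset.Icc 1 (3*q), 6 * m ^ 3 * α ^ (9*q + p))
          + ∑ j ∈ (Finset.Icc 1 s).filter (fun j => sMach q M j = (k : ℕ)),
              6 * m ^ 3 * α ^ (12*q + χ j))
          + ∑ p ∈ Finset.Icc 1 (3*q), 6 * m ^ 3 * α ^ (3*q + p))
          + ∑ p ∈ Finset.Icc 1 (3*q), 6 * m ^ 3 * α ^ p := by
    rw [allElems]
    rw [Finset.filter_union, Finset.filter_union, Finset.filter_union, Finset.filter_union]
    have nc : ∀ (x y : ℕ), Elem.w x ≠ Elem.wbar y := fun x y h => Elem.noConfusion h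
    have dwwb := Finset.disjoint_filter_filter (p := fun η => emach q M η = (k : ℕ))
      (q := fun η => emach q M η = (k : ℕ)) (himg nc (Finset.Icc 1 (3*n)) (Finset.Icc 1 (3*n)))
    have dws := Finset.disjoint_filter_filter (p := fun η => emach q M η = (k : ℕ))
      (q := fun η => emach q M η = (k : ℕ))
      (himg (fun x y h => Elem.noConfusion h) (Finset.Icc 1 (3*n)) (Finset.Icc 1 s)
        (f := Elem.w) (g := Elem.s))
    have dwbs := Finset.disjoint_filter_filter (p := fun η => emach q M η = (k : ℕ))
      (q := fun η => emach q M η = (k : ℕ))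
      (himg (fun x y h => Elem.noConfusion h) (Finset.Icc 1 (3*n)) (Finset.Icc 1 s)
        (f := Elem.wbar) (g := Elem.s))
    have dwa := Finset.disjoint_filter_filter (p := fun η => emach q M η = (k : ℕ))
      (q := fun η => emach q M η = (k : ℕ))
      (himg (fun x y h => Elem.noConfusion h) (Finset.Icc 1 (3*n)) (Finset.Icc 1 (3*n))
        (f := Elem.w) (g := Elem.a))
    have dwba := Finset.disjoint_filter_filter (p := fun η => emach q M η = (k : ℕ))
      (q := fun η => emach q M η = (k : ℕ))
      (himg (fun x y h => Elem.noConfusion h) (Finset.Icc 1 (3*n)) (Finset.Icc 1 (3*n))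
        (f := Elem.wbar) (g := Elem.a))
    have dsa := Finset.disjoint_filter_filter (p := fun η => emach q M η = (k : ℕ))
      (q := fun η => emach q M η = (k : ℕ))
      (himg (fun x y h => Elem.noConfusion h) (Finset.Icc 1 s) (Finset.Icc 1 (3*n))
        (f := Elem.s) (g := Elem.a))
    have dwb' := Finset.disjoint_filter_filter (p := fun η => emach q M η = (k : ℕ))
      (q := fun η => emach q M η = (k : ℕ))
      (himg (fun x y h => Elem.noConfusion h) (Finset.Icc 1 (3*n)) (Finset.Icc 1 (3*n))
        (f := Elem.w) (g := Elem.b))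
    have dwbb := Finset.disjoint_filter_filter (p := fun η => emach q M η = (k : ℕ))
      (q := fun η => emach q M η = (k : ℕ))
      (himg (fun x y h => Elem.noConfusion h) (Finset.Icc 1 (3*n)) (Finset.Icc 1 (3*n))
        (f := Elem.wbar) (g := Elem.b))
    have dsb := Finset.disjoint_filter_filter (p := fun η => emach q M η = (k : ℕ))
      (q := fun η => emach q M η = (k : ℕ))
      (himg (fun x y h => Elem.noConfusion h) (Finset.Icc 1 s) (Finset.Icc 1 (3*n))
        (f := Elem.s) (g := Elem.b))
    have dab := Finset.disjoint_filter_filter (p := fun η => emach q M η = (k : ℕ))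
      (q := fun η => emach q M η = (k : ℕ))
      (himg (fun x y h => Elem.noConfusion h) (Finset.Icc 1 (3*n)) (Finset.Icc 1 (3*n))
        (f := Elem.a) (g := Elem.b))
    rw [Finset.sum_union (by
      refine Finset.disjoint_union_left.mpr ⟨Finset.disjoint_union_left.mpr
        ⟨Finset.disjoint_union_left.mpr ⟨dwb', dwbb⟩, dsb⟩, dab⟩)]
    rw [Finset.sum_union (by
      refine Finset.disjoint_union_left.mpr ⟨Finset.disjoint_union_left.mpr
        ⟨dwa, dwba⟩, dsa⟩)]
    rw [Finset.sum_union (Finset.disjoint_union_left.mpr ⟨dws, dwbs⟩)]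
    rw [Finset.sum_union dwwb]
    have hwpc : ∑ η ∈ ((Finset.Icc 1 (3*n)).image Elem.w).filter
          (fun η => emach q M η = (k : ℕ)), 6 * m ^ 3 * α ^ fmap q χ η
        = ∑ p ∈ Finset.Icc 1 (3*q), 6 * m ^ 3 * α ^ (6*q + p) := by
      rw [Finset.filter_image]
      have hfeq : ((Finset.Icc 1 (3*n)).filter (fun i => emach q M (Elem.w i) = (k : ℕ)))
          = Finset.Icc (3*(k:ℕ)*q+1) (3*(k:ℕ)*q+3*q) := by
        rw [← blk_filter hq hqm hkm (n := n)]
        exact Finset.filter_congr (fun i _ => Iff.rfl)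
      rw [hfeq,
        Finset.sum_image (fun x _ y _ h => Elem.w.inj h)]
      exact piece_sum' hq (k : ℕ) (fun x => 6 * m ^ 3 * α ^ (6*q + x))
    have hwbpc : ∑ η ∈ ((Finset.Icc 1 (3*n)).image Elem.wbar).filter
          (fun η => emach q M η = (k : ℕ)), 6 * m ^ 3 * α ^ fmap q χ η
        = ∑ p ∈ Finset.Icc 1 (3*q), 6 * m ^ 3 * α ^ (9*q + p) := by
      rw [Finset.filter_image]
      have hfeq : ((Finset.Icc 1 (3*n)).filter (fun i => emach q M (Elem.wbar i) = (k : ℕ)))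
          = Finset.Icc (3*(k:ℕ)*q+1) (3*(k:ℕ)*q+3*q) := by
        rw [← blk_filter hq hqm hkm (n := n)]
        exact Finset.filter_congr (fun i _ => Iff.rfl)
      rw [hfeq,
        Finset.sum_image (fun x _ y _ h => Elem.wbar.inj h)]
      exact piece_sum' hq (k : ℕ) (fun x => 6 * m ^ 3 * α ^ (9*q + x))
    have hspc : ∑ η ∈ ((Finset.Icc 1 s).image Elem.s).filter
          (fun η => emach q M η = (k : ℕ)), 6 * m ^ 3 * α ^ fmap q χ η
        = ∑ j ∈ (Finset.Icc 1 s).filter (fun j => sMach q M j = (k : ℕ)),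
            6 * m ^ 3 * α ^ (12*q + χ j) := by
      rw [Finset.filter_image]
      have hfeq : ((Finset.Icc 1 s).filter (fun j => emach q M (Elem.s j) = (k : ℕ)))
          = (Finset.Icc 1 s).filter (fun j => sMach q M j = (k : ℕ)) :=
        Finset.filter_congr (fun j _ => Iff.rfl)
      rw [hfeq, Finset.sum_image (fun x _ y _ h => Elem.s.inj h)]
      rfl
    have hapc : ∑ η ∈ ((Finset.Icc 1 (3*n)).image Elem.a).filter
          (fun η => emach q M η = (k : ℕ)), 6 * m ^ 3 * α ^ fmap q χ η
        = ∑ p ∈ Finset.Icc 1 (3*q), 6 * m ^ 3 * α ^ (3*q + p) := by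
      rw [Finset.filter_image]
      have hfeq : ((Finset.Icc 1 (3*n)).filter (fun i => emach q M (Elem.a i) = (k : ℕ)))
          = Finset.Icc (3*(k:ℕ)*q+1) (3*(k:ℕ)*q+3*q) := by
        rw [← blk_filter hq hqm hkm (n := n)]
        exact Finset.filter_congr (fun i _ => Iff.rfl)
      rw [hfeq,
        Finset.sum_image (fun x _ y _ h => Elem.a.inj h)]
      exact piece_sum' hq (k : ℕ) (fun x => 6 * m ^ 3 * α ^ (3*q + x))
    have hbpc : ∑ η ∈ ((Finset.Icc 1 (3*n)).image Elem.b).filter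
          (fun η => emach q M η = (k : ℕ)), 6 * m ^ 3 * α ^ fmap q χ η
        = ∑ p ∈ Finset.Icc 1 (3*q), 6 * m ^ 3 * α ^ p := by
      rw [Finset.filter_image]
      have hfeq : ((Finset.Icc 1 (3*n)).filter (fun i => emach q M (Elem.b i) = (k : ℕ)))
          = Finset.Icc (3*(k:ℕ)*q+1) (3*(k:ℕ)*q+3*q) := by
        rw [← blk_filter hq hqm hkm (n := n)]
        exact Finset.filter_congr (fun i _ => Iff.rfl)
      rw [hfeq,
        Finset.sum_image (fun x _ y _ h => Elem.b.inj h)]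
      exact piece_sum' hq (k : ℕ) (fun x => 6 * m ^ 3 * α ^ x)
    rw [hwpc, hwbpc, hspc, hapc, hbpc]
  -- the dummy-job sum
  have dumSum : ∑ job ∈ (dummyJobs s τ m χ).filter (fun job => φ job = (k : ℕ)),
      jobSize α q m χ rk job
      = ∑ t ∈ (Finset.Icc 1 τ).filter (fun t => (k : ℕ) ∈ missingSet q m s M χ t),
          6 * m ^ 3 * α ^ (12*q + t) := by
    rw [dummyJobs, Finset.filter_biUnion]
    have pd : ((Finset.Icc 1 τ : Finset ℕ) : Set ℕ).PairwiseDisjoint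
        (fun t => ((Finset.range (m - classCard s χ t)).image (Job.dummy t)).filter
          (fun job => φ job = (k : ℕ))) := by
      intro t _ t' _ hne
      rw [Function.onFun, Finset.disjoint_left]
      intro x hx hx'
      rw [Finset.mem_filter, Finset.mem_image] at hx hx'
      obtain ⟨⟨idx, _, rfl⟩, _⟩ := hx
      obtain ⟨⟨idx', _, he⟩, _⟩ := hx'
      exact hne ((Job.dummy.inj he).1.symm)
    rw [Finset.sum_biUnion pd, Finset.sum_filter]
    apply Finset.sum_congr rfl
    intro t ht
    rw [Finset.filter_image, Finset.sum_image (fun x _ y _ h => (Job.dummy.inj h).2)]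
    have hc : m - classCard s χ t = (missingSet q m s M χ t).card := by
      rw [missingSet]
      exact (card_missing hq hm hqm hM hT2form hχ t).symm
    have hpredeq : ((Finset.range (m - classCard s χ t)).filter
          (fun idx => φ (Job.dummy t idx) = (k : ℕ)))
        = ((Finset.range ((missingSet q m s M χ t).card)).filter
          (fun idx => (((missingSet q m s M χ t).sort (·≤·)).getD idx 0) = (k : ℕ))) := by
      rw [hc]
      exact Finset.filter_congr (fun idx _ => Iff.rfl)
    rw [hpredeq]
    have hsc := sort_count (missingSet q m s M χ t) (k : ℕ)
    have hconst : ∑ x ∈ ((Finset.range ((missingSet q m s M χ t).card)).filter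
          (fun idx => (((missingSet q m s M χ t).sort (·≤·)).getD idx 0) = (k : ℕ))),
        jobSize α q m χ rk (Job.dummy t x)
        = ∑ _x ∈ ((Finset.range ((missingSet q m s M χ t).card)).filter
          (fun idx => (((missingSet q m s M χ t).sort (·≤·)).getD idx 0) = (k : ℕ))),
          6 * m ^ 3 * α ^ (12*q + t) :=
      Finset.sum_congr rfl (fun x _ => rfl)
    rw [hconst, Finset.sum_const, hsc]
    split_ifs with hmem <;> simp
  -- combining the s-cover sums with the dummy sums over all colours
  have hJinj : ∀ j ∈ (Finset.Icc 1 s).filter (fun j => sMach q M j = (k : ℕ)),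
      ∀ j' ∈ (Finset.Icc 1 s).filter (fun j => sMach q M j = (k : ℕ)),
        χ j = χ j' → j = j' := by
    intro j hj j' hj' he
    by_contra hne
    rw [Finset.mem_filter] at hj hj'
    exact sMach_color hq hm hqm hM hT2form hχ hj.1 hj'.1 hne (hj.2.trans hj'.2.symm) he
  have himval : ∑ j ∈ (Finset.Icc 1 s).filter (fun j => sMach q M j = (k : ℕ)),
        6 * m ^ 3 * α ^ (12*q + χ j)
      = ∑ t ∈ ((Finset.Icc 1 s).filter (fun j => sMach q M j = (k : ℕ))).image χ,
          6 * m ^ 3 * α ^ (12*q + t) :=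
    (Finset.sum_image (f := fun t => 6 * m ^ 3 * α ^ (12*q + t)) hJinj).symm
  have hDk : (Finset.Icc 1 τ).filter (fun t => (k : ℕ) ∈ missingSet q m s M χ t)
      = Finset.Icc 1 τ \ ((Finset.Icc 1 s).filter (fun j => sMach q M j = (k : ℕ))).image χ := by
    ext t
    simp only [Finset.mem_filter, Finset.mem_sdiff, missingSet, Finset.mem_range,
      Finset.mem_image]
    constructor
    · rintro ⟨ht, -, hnot⟩
      exact ⟨ht, fun ⟨j, ⟨hj1, hj2⟩, hj3⟩ => hnot ⟨j, ⟨hj1, hj3⟩, hj2⟩⟩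
    · rintro ⟨ht, hnot⟩
      exact ⟨ht, hkm, fun ⟨j, ⟨hj1, hj2⟩, hj3⟩ => hnot ⟨j, ⟨hj1, hj3⟩, hj2⟩⟩
  have hsubJ : ((Finset.Icc 1 s).filter (fun j => sMach q M j = (k : ℕ))).image χ
      ⊆ Finset.Icc 1 τ := by
    intro t ht
    obtain ⟨j, hj, rfl⟩ := Finset.mem_image.mp ht
    exact hχrange j (Finset.mem_filter.mp hj).1
  have colorSum : (∑ j ∈ (Finset.Icc 1 s).filter (fun j => sMach q M j = (k : ℕ)),
        6 * m ^ 3 * α ^ (12*q + χ j))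
      + (∑ t ∈ (Finset.Icc 1 τ).filter (fun t => (k : ℕ) ∈ missingSet q m s M χ t),
          6 * m ^ 3 * α ^ (12*q + t))
      = ∑ t ∈ Finset.Icc 1 τ, 6 * m ^ 3 * α ^ (12*q + t) := by
    rw [himval, hDk, add_comm]
    exact Finset.sum_sdiff hsubJ
  -- reindexing the pieces
  have e1 : ∑ p ∈ Finset.Icc 1 (3*q), 6*m^3*α^(3*q+p)
      = ∑ i ∈ Finset.Icc (3*q+1) (6*q), 6*m^3*α^i := by
    have := sum_shift (fun i => 6*m^3*α^i) (3*q) (3*q)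
    rw [show 3*q+3*q = 6*q from by ring] at this
    exact this
  have e2 : ∑ p ∈ Finset.Icc 1 (3*q), 6*m^3*α^(6*q+p)
      = ∑ i ∈ Finset.Icc (6*q+1) (9*q), 6*m^3*α^i := by
    have := sum_shift (fun i => 6*m^3*α^i) (6*q) (3*q)
    rw [show 6*q+3*q = 9*q from by ring] at this
    exact this
  have e3 : ∑ p ∈ Finset.Icc 1 (3*q), 6*m^3*α^(9*q+p)
      = ∑ i ∈ Finset.Icc (9*q+1) (12*q), 6*m^3*α^i := by
    have := sum_shift (fun i => 6*m^3*α^i) (9*q) (3*q)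
    rw [show 9*q+3*q = 12*q from by ring] at this
    exact this
  have e4 : ∑ t ∈ Finset.Icc 1 τ, 6*m^3*α^(12*q+t)
      = ∑ i ∈ Finset.Icc (12*q+1) (12*q+τ), 6*m^3*α^i :=
    sum_shift (fun i => 6*m^3*α^i) (12*q) τ
  have f1 : (∑ i ∈ Finset.Icc 1 (3*q), 6*m^3*α^i)
      + ∑ i ∈ Finset.Icc (3*q+1) (6*q), 6*m^3*α^i
      = ∑ i ∈ Finset.Icc 1 (6*q), 6*m^3*α^i :=
    glue0 (fun i => 6*m^3*α^i) (3*q) (6*q) (by omega)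
  have f2 : (∑ i ∈ Finset.Icc 1 (6*q), 6*m^3*α^i)
      + ∑ i ∈ Finset.Icc (6*q+1) (9*q), 6*m^3*α^i
      = ∑ i ∈ Finset.Icc 1 (9*q), 6*m^3*α^i :=
    glue0 (fun i => 6*m^3*α^i) (6*q) (9*q) (by omega)
  have f3 : (∑ i ∈ Finset.Icc 1 (9*q), 6*m^3*α^i)
      + ∑ i ∈ Finset.Icc (9*q+1) (12*q), 6*m^3*α^i
      = ∑ i ∈ Finset.Icc 1 (12*q), 6*m^3*α^i :=
    glue0 (fun i => 6*m^3*α^i) (9*q) (12*q) (by omega)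
  have f4 : (∑ i ∈ Finset.Icc 1 (12*q), 6*m^3*α^i)
      + ∑ i ∈ Finset.Icc (12*q+1) (12*q+τ), 6*m^3*α^i
      = ∑ i ∈ Finset.Icc 1 (12*q+τ), 6*m^3*α^i :=
    glue0 (fun i => 6*m^3*α^i) (12*q) (12*q+τ) (by omega)
  have hRHS : 6 * m ^ 3 * ∑ i ∈ Finset.Icc 1 (12*q+τ), α ^ i
      = ∑ i ∈ Finset.Icc 1 (12*q+τ), 6*m^3*α^i := Finset.mul_sum _ _ _
  rw [covSum, mtchSum, dumSum]
  omega
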